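/- Let θ_max := max_{ℓ} |θ_ℓ|. Then the map t ↦ R_t is Lipschitz in operator norm with constant θ_max: for all t₁, t₂ ∈ ℝ, ‖R_{t₁} − R_{t₂}‖_op ≤ θ_max · |t₁ − t₂|. In particular, the point-wise RoPE score sensitivity to a timestamp perturbation ε satisfies |⟨R_{t_q} q, R_{t+ε} k⟩ − ⟨R_{t_q} q, R_t k⟩| ≤ ‖q‖ · ‖k‖ · θ_max · |ε| for all q, k ∈ ℝ^{2n} and t_q, t, ε ∈ ℝ. -/
import Mathlib


noncomputable section

open MeasureTheory
open Matrix
open scoped RealInnerProductSpace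

/-- `sinc x = sin x / x` for `x ≠ 0`, and `sinc 0 = 1`. -/
def sinc (x : ℝ) : ℝ := if x = 0 then 1 else Real.sin x / x

/-- The 2×2 rotation matrix. -/
def Rot (x : ℝ) : Matrix (Fin 2) (Fin 2) ℝ :=
  !![Real.cos x, -Real.sin x; Real.sin x, Real.cos x]

/-- The RoPE matrix `R_t`: block diagonal with ℓ-th block `Rot (θ ℓ * t)`. -/
def RoPE {n : ℕ} (θ : Fin n → ℝ) (t : ℝ) :
    Matrix (Fin 2 × Fin n) (Fin 2 × Fin n) ℝ :=
  Matrix.blockDiagonal fun ℓ => Rot (θ ℓ * t)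

/-- The interval (RoTE) matrix `R_{c,r}`: block diagonal with ℓ-th block
`sinc (θ ℓ * r) • Rot (θ ℓ * c)`. -/
def RoTE {n : ℕ} (θ : Fin n → ℝ) (c r : ℝ) :
    Matrix (Fin 2 × Fin n) (Fin 2 × Fin n) ℝ :=
  Matrix.blockDiagonal fun ℓ => sinc (θ ℓ * r) • Rot (θ ℓ * c)

/-- The normalization constant `C_r = (1/n) ∑ ℓ, sinc (θ ℓ * r)`. -/
def Cnorm {n : ℕ} (θ : Fin n → ℝ) (r : ℝ) : ℝ :=
  (1 / (n : ℝ)) * ∑ ℓ : Fin n, sinc (θ ℓ * r)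

/-- Action of a `2n × 2n` matrix on Euclidean space `ℝ^{2n}`. -/
def mApply {n : ℕ} (M : Matrix (Fin 2 × Fin n) (Fin 2 × Fin n) ℝ)
    (v : EuclideanSpace ℝ (Fin 2 × Fin n)) : EuclideanSpace ℝ (Fin 2 × Fin n) :=
  Matrix.toEuclideanLin M v

/-- Operator norm on `ℝ^{2n×2n}` induced by the Euclidean norm on `ℝ^{2n}`. -/
def opNorm {n : ℕ} (M : Matrix (Fin 2 × Fin n) (Fin 2 × Fin n) ℝ) : ℝ :=
  ‖Matrix.toEuclideanCLM (𝕜 := ℝ) M‖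

private lemma aux_two_sub_two_cos (x : ℝ) : 2 - 2 * Real.cos x ≤ x ^ 2 := by
  have h2 := Real.sin_sq_add_cos_sq (x/2)
  have h1 := Real.cos_two_mul (x/2)
  rw [show 2*(x/2) = x by ring] at h1
  nlinarith [Real.sin_sq_le_sq (x := x/2)]

private lemma aux_blockDiag_apply {n : ℕ} (d : Fin n → Matrix (Fin 2) (Fin 2) ℝ)
    (v : Fin 2 × Fin n → ℝ) (p : Fin 2 × Fin n) :
    (Matrix.blockDiagonal d *ᵥ v) p = d p.2 p.1 0 * v (0, p.2) + d p.2 p.1 1 * v (1, p.2) := by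
  obtain ⟨i, l⟩ := p
  simp [Matrix.mulVec, dotProduct, Fintype.sum_prod_type, Matrix.blockDiagonal_apply,
    Fin.sum_univ_two, mul_ite, mul_zero]

private lemma aux_sq_sum {n : ℕ} (d : Fin n → Matrix (Fin 2) (Fin 2) ℝ) (C : ℝ)
    (hblock : ∀ (ℓ : Fin n) (x y : ℝ),
      (d ℓ 0 0 * x + d ℓ 0 1 * y) ^ 2 + (d ℓ 1 0 * x + d ℓ 1 1 * y) ^ 2 ≤ C ^ 2 * (x ^ 2 + y ^ 2))
    (v : Fin 2 × Fin n → ℝ) :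
    ∑ p : Fin 2 × Fin n, (Matrix.blockDiagonal d *ᵥ v) p ^ 2 ≤
      C ^ 2 * ∑ p : Fin 2 × Fin n, v p ^ 2 := by
  have lhs_eq : ∑ p : Fin 2 × Fin n, (Matrix.blockDiagonal d *ᵥ v) p ^ 2 =
      ∑ ℓ : Fin n, ((d ℓ 0 0 * v (0, ℓ) + d ℓ 0 1 * v (1, ℓ)) ^ 2 +
        (d ℓ 1 0 * v (0, ℓ) + d ℓ 1 1 * v (1, ℓ)) ^ 2) := by
    simp only [aux_blockDiag_apply]
    rw [Fintype.sum_prod_type, Fin.sum_univ_two, ← Finset.sum_add_distrib]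
  have rhs_eq : ∑ p : Fin 2 × Fin n, v p ^ 2 =
      ∑ ℓ : Fin n, (v (0, ℓ) ^ 2 + v (1, ℓ) ^ 2) := by
    rw [Fintype.sum_prod_type, Fin.sum_univ_two, ← Finset.sum_add_distrib]
  rw [lhs_eq, rhs_eq, Finset.mul_sum]
  exact Finset.sum_le_sum fun ℓ _ => hblock ℓ _ _

private lemma aux_norm_bound {n : ℕ} (d : Fin n → Matrix (Fin 2) (Fin 2) ℝ) (C : ℝ)
    (hC : 0 ≤ C)
    (hblock : ∀ (ℓ : Fin n) (x y : ℝ),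
      (d ℓ 0 0 * x + d ℓ 0 1 * y) ^ 2 + (d ℓ 1 0 * x + d ℓ 1 1 * y) ^ 2 ≤ C ^ 2 * (x ^ 2 + y ^ 2))
    (v : EuclideanSpace ℝ (Fin 2 × Fin n)) :
    ‖mApply (Matrix.blockDiagonal d) v‖ ≤ C * ‖v‖ := by
  set M := Matrix.blockDiagonal d with hM
  have h := aux_sq_sum d C hblock (WithLp.equiv 2 _ v)
  have h1 : ‖mApply M v‖ = Real.sqrt (∑ p : Fin 2 × Fin n, (M *ᵥ (WithLp.equiv 2 _ v)) p ^ 2) := by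
    rw [EuclideanSpace.norm_eq]
    congr 1
    refine Finset.sum_congr rfl fun p _ => ?_
    rw [Real.norm_eq_abs, sq_abs]
    rfl
  have h2 : ‖v‖ = Real.sqrt (∑ p : Fin 2 × Fin n, (WithLp.equiv 2 _ v) p ^ 2) := by
    rw [EuclideanSpace.norm_eq]
    congr 1
    refine Finset.sum_congr rfl fun p _ => ?_
    rw [Real.norm_eq_abs, sq_abs]
    rfl
  rw [h1, h2]
  calc Real.sqrt (∑ p : Fin 2 × Fin n, (M *ᵥ (WithLp.equiv 2 _ v)) p ^ 2)
      ≤ Real.sqrt (C ^ 2 * ∑ p : Fin 2 × Fin n, (WithLp.equiv 2 _ v) p ^ 2) :=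
        Real.sqrt_le_sqrt h
    _ = C * Real.sqrt (∑ p : Fin 2 × Fin n, (WithLp.equiv 2 _ v) p ^ 2) := by
        rw [Real.sqrt_mul (sq_nonneg C), Real.sqrt_sq hC]

private lemma aux_rot_diff_block (a b C : ℝ) (h : |a - b| ≤ C) (x y : ℝ) :
    ((Rot a - Rot b) 0 0 * x + (Rot a - Rot b) 0 1 * y) ^ 2 +
      ((Rot a - Rot b) 1 0 * x + (Rot a - Rot b) 1 1 * y) ^ 2 ≤ C ^ 2 * (x ^ 2 + y ^ 2) := by
  have key : (Real.cos a - Real.cos b) ^ 2 + (Real.sin a - Real.sin b) ^ 2 ≤ (a - b) ^ 2 := by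
    have h1 := aux_two_sub_two_cos (a - b)
    have h2 := Real.cos_sub a b
    nlinarith [Real.sin_sq_add_cos_sq a, Real.sin_sq_add_cos_sq b]
  have hab : (a - b) ^ 2 ≤ C ^ 2 := by
    have := pow_le_pow_left₀ (abs_nonneg (a - b)) h 2
    rwa [sq_abs] at this
  have hentries : (Rot a - Rot b) 0 0 = Real.cos a - Real.cos b ∧
      (Rot a - Rot b) 0 1 = -Real.sin a - -Real.sin b ∧
      (Rot a - Rot b) 1 0 = Real.sin a - Real.sin b ∧
      (Rot a - Rot b) 1 1 = Real.cos a - Real.cos b := by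
    refine ⟨?_, ?_, ?_, ?_⟩ <;> simp [Rot, Matrix.sub_apply]
  obtain ⟨e1, e2, e3, e4⟩ := hentries
  rw [e1, e2, e3, e4]
  nlinarith [key, hab, sq_nonneg x, sq_nonneg y, sq_nonneg (x + y), sq_nonneg (x - y),
    mul_le_mul_of_nonneg_right (key.trans hab) (by positivity : (0:ℝ) ≤ x ^ 2 + y ^ 2)]

private lemma aux_rot_block (a : ℝ) (x y : ℝ) :
    (Rot a 0 0 * x + Rot a 0 1 * y) ^ 2 + (Rot a 1 0 * x + Rot a 1 1 * y) ^ 2 ≤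
      (1:ℝ) ^ 2 * (x ^ 2 + y ^ 2) := by
  have h := Real.sin_sq_add_cos_sq a
  have e1 : Rot a 0 0 = Real.cos a := by simp [Rot]
  have e2 : Rot a 0 1 = -Real.sin a := by simp [Rot]
  have e3 : Rot a 1 0 = Real.sin a := by simp [Rot]
  have e4 : Rot a 1 1 = Real.cos a := by simp [Rot]
  rw [e1, e2, e3, e4]
  nlinarith

/-- `t ↦ R_t` is Lipschitz in operator norm with constant
`θ_max = max_ℓ |θ_ℓ|`; in particular the point-wise RoPE score sensitivity to a
timestamp perturbation `ε` is at most `‖q‖ ‖k‖ θ_max |ε|`. -/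
theorem rope_lipschitz_and_score_sensitivity (n : ℕ) (hn : 1 ≤ n) (θ : Fin n → ℝ)
    (θmax : ℝ) (hθmax : θmax = ⨆ ℓ : Fin n, |θ ℓ|) :
    (∀ t₁ t₂ : ℝ, opNorm (RoPE θ t₁ - RoPE θ t₂) ≤ θmax * |t₁ - t₂|) ∧
    (∀ (q k : EuclideanSpace ℝ (Fin 2 × Fin n)) (tq t ε : ℝ),
      |⟪mApply (RoPE θ tq) q, mApply (RoPE θ (t + ε)) k⟫ -
          ⟪mApply (RoPE θ tq) q, mApply (RoPE θ t) k⟫| ≤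
        ‖q‖ * ‖k‖ * θmax * |ε|) := by
  haveI : NeZero n := ⟨by omega⟩
  have hθle : ∀ ℓ : Fin n, |θ ℓ| ≤ θmax := by
    intro ℓ
    rw [hθmax]
    exact le_ciSup (f := fun ℓ : Fin n => |θ ℓ|) (Set.Finite.bddAbove (Set.finite_range _)) ℓ
  have hθ0 : 0 ≤ θmax := le_trans (abs_nonneg (θ 0)) (hθle 0)
  -- decompose difference as block diagonal
  have hdiff : ∀ t₁ t₂ : ℝ, RoPE θ t₁ - RoPE θ t₂ =
      Matrix.blockDiagonal (fun ℓ => Rot (θ ℓ * t₁) - Rot (θ ℓ * t₂)) := by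
    intro t₁ t₂
    rw [RoPE, RoPE, ← Matrix.blockDiagonal_sub]
    rfl
  -- pointwise bound for the difference matrix
  have hptw : ∀ (t₁ t₂ : ℝ) (v : EuclideanSpace ℝ (Fin 2 × Fin n)),
      ‖mApply (RoPE θ t₁ - RoPE θ t₂) v‖ ≤ (θmax * |t₁ - t₂|) * ‖v‖ := by
    intro t₁ t₂ v
    rw [hdiff]
    refine aux_norm_bound _ _ (by positivity) (fun ℓ x y => ?_) v
    refine aux_rot_diff_block _ _ _ ?_ x y
    rw [show θ ℓ * t₁ - θ ℓ * t₂ = θ ℓ * (t₁ - t₂) by ring, abs_mul]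
    exact mul_le_mul_of_nonneg_right (hθle ℓ) (abs_nonneg _)
  -- isometry-type bound for RoPE itself
  have hiso : ∀ (t : ℝ) (v : EuclideanSpace ℝ (Fin 2 × Fin n)),
      ‖mApply (RoPE θ t) v‖ ≤ ‖v‖ := by
    intro t v
    have := aux_norm_bound (fun ℓ => Rot (θ ℓ * t)) 1 zero_le_one
      (fun ℓ x y => aux_rot_block (θ ℓ * t) x y) v
    rwa [one_mul] at this
  have hlip : ∀ t₁ t₂ : ℝ, opNorm (RoPE θ t₁ - RoPE θ t₂) ≤ θmax * |t₁ - t₂| := by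
    intro t₁ t₂
    refine ContinuousLinearMap.opNorm_le_bound _ (by positivity) fun v => ?_
    have : (Matrix.toEuclideanCLM (𝕜 := ℝ) (RoPE θ t₁ - RoPE θ t₂)) v =
        mApply (RoPE θ t₁ - RoPE θ t₂) v := by
      rw [mApply, ← Matrix.coe_toEuclideanCLM_eq_toEuclideanLin]
      rfl
    rw [this]
    exact hptw t₁ t₂ v
  refine ⟨hlip, fun q k tq t ε => ?_⟩
  set u := mApply (RoPE θ tq) q
  have hsub : mApply (RoPE θ (t + ε)) k - mApply (RoPE θ t) k =
      mApply (RoPE θ (t + ε) - RoPE θ t) k := by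
    rw [mApply, mApply, mApply, map_sub, LinearMap.sub_apply]
  have step1 : ⟪u, mApply (RoPE θ (t + ε)) k⟫ - ⟪u, mApply (RoPE θ t) k⟫ =
      ⟪u, mApply (RoPE θ (t + ε) - RoPE θ t) k⟫ := by
    rw [← inner_sub_right, hsub]
  rw [step1]
  calc |⟪u, mApply (RoPE θ (t + ε) - RoPE θ t) k⟫|
      ≤ ‖u‖ * ‖mApply (RoPE θ (t + ε) - RoPE θ t) k‖ := abs_real_inner_le_norm _ _
    _ ≤ ‖q‖ * ((θmax * |t + ε - t|) * ‖k‖) := by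
        refine mul_le_mul (hiso tq q) (hptw _ _ k) (norm_nonneg _) (norm_nonneg _)
    _ = ‖q‖ * ‖k‖ * θmax * |ε| := by
        rw [show t + ε - t = ε by ring]; ring
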